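/- arXiv:1705.06517 — 3 statements merged into one kernel-verified Lean document; each statement's English description precedes it below -/
import Mathlib

section
/- The normalizer of H in S_{2n} is the semidirect product H ⋊ N, where N = {w̃ : w ∈ S_n}; that is, every element of the normalizer of H can be written uniquely as a product h·w̃ with h ∈ H and w ∈ S_n. -/
/-- The equivalence `Fin n × Fin 2 ≃ Fin (2*n)`, `(a, b) ↦ 2a + b`. -/
def pairFinEquiv (n : ℕ) : Fin n × Fin 2 ≃ Fin (2 * n) where
  toFun p := ⟨2 * p.1.1 + p.2.1, by have h1 := p.1.2; have h2 := p.2.2; omega⟩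
  invFun i := (⟨i.1 / 2, by have := i.2; omega⟩, ⟨i.1 % 2, by omega⟩)
  left_inv := by
    rintro ⟨⟨a, ha⟩, ⟨b, hb⟩⟩
    simp only [Prod.mk.injEq]
    constructor <;> apply Fin.ext <;> simp <;> omega
  right_inv := by
    rintro ⟨i, hi⟩
    apply Fin.ext
    simp
    omega

/-- The doubling map `w ↦ w̃`, sending a permutation of `{0, …, n-1}` to the permutation of
`{0, …, 2n-1}` with `w̃(2i) = 2w(i)` and `w̃(2i+1) = 2w(i)+1` (the zero-based version of
`w̃(2i) = 2w(i)`, `w̃(2i-1) = 2w(i)-1`). -/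
def double {n : ℕ} (w : Equiv.Perm (Fin n)) : Equiv.Perm (Fin (2 * n)) :=
  (pairFinEquiv n).permCongr (Equiv.prodCongr w (Equiv.refl (Fin 2)))

/-- The number of inversions of a permutation, i.e. its Coxeter length. -/
noncomputable def invLength {n : ℕ} (u : Equiv.Perm (Fin n)) : ℕ :=
  Set.ncard { p : Fin n × Fin n | p.1 < p.2 ∧ u p.2 < u p.1 }

/-- Bruhat order on the symmetric group: the reflexive-transitive closure of the relation
`a → a * t` where `t` is a transposition and `ℓ(a * t) > ℓ(a)`. -/
def BruhatLE {n : ℕ} (x w : Equiv.Perm (Fin n)) : Prop :=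
  Relation.ReflTransGen
    (fun a b => (∃ i j : Fin n, b = a * Equiv.swap i j) ∧ invLength a < invLength b) x w

/-- The subgroup `H` of `S_{2n}` of permutations preserving each pair `{2i, 2i+1}`. -/
def pairSubgroup (n : ℕ) : Subgroup (Equiv.Perm (Fin (2 * n))) where
  carrier := { u | ∀ i, (u i).1 / 2 = i.1 / 2 }
  one_mem' := by intro i; rfl
  mul_mem' := by
    intro a b ha hb i
    rw [Equiv.Perm.mul_apply, ha, hb]
  inv_mem' := by
    intro a ha i
    have h := ha (a⁻¹ i)
    rw [show a (a⁻¹ i) = i from Equiv.apply_symm_apply a i] at h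
    omega

/-- The subgroup `K` of `S_{2n}` of parity-preserving permutations. -/
def paritySubgroup (n : ℕ) : Subgroup (Equiv.Perm (Fin (2 * n))) where
  carrier := { u | ∀ i, (u i).1 % 2 = i.1 % 2 }
  one_mem' := by intro i; rfl
  mul_mem' := by
    intro a b ha hb i
    rw [Equiv.Perm.mul_apply, ha, hb]
  inv_mem' := by
    intro a ha i
    have h := ha (a⁻¹ i)
    rw [show a (a⁻¹ i) = i from Equiv.apply_symm_apply a i] at h
    omega

/-- A permutation of `{0,…,2n-1}` is bi-`H`-reduced if it is increasing on each pair
`{2i, 2i+1}` and so is its inverse. -/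
def BiReduced {n : ℕ} (v : Equiv.Perm (Fin (2 * n))) : Prop :=
  ∀ i : Fin n,
    v ⟨2 * i.1, by have := i.2; omega⟩ < v ⟨2 * i.1 + 1, by have := i.2; omega⟩ ∧
    v⁻¹ ⟨2 * i.1, by have := i.2; omega⟩ < v⁻¹ ⟨2 * i.1 + 1, by have := i.2; omega⟩

/-- Membership of `v` in the double coset `H x H` of `H = pairSubgroup n`. -/
def InPairDoubleCoset {n : ℕ} (x v : Equiv.Perm (Fin (2 * n))) : Prop :=
  ∃ h₁ ∈ pairSubgroup n, ∃ h₂ ∈ pairSubgroup n, v = h₁ * x * h₂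

/-- The matrix attached to a double coset `HuH`: the `(i,j)` entry is
`#({2i, 2i+1} ∩ u({2j, 2j+1}))`. -/
noncomputable def cosetMatrix {n : ℕ} (u : Equiv.Perm (Fin (2 * n))) :
    Matrix (Fin n) (Fin n) ℕ :=
  fun i j => Set.ncard { k : Fin (2 * n) | k.1 / 2 = j.1 ∧ (u k).1 / 2 = i.1 }

/-- The simple reflection `s_j = (j, j+1)` of `S_n` (zero-based). -/
def sRefl {n : ℕ} (j : {j : ℕ // j + 1 < n}) : Equiv.Perm (Fin n) :=
  Equiv.swap ⟨j.1, Nat.lt_of_succ_lt j.2⟩ ⟨j.1 + 1, j.2⟩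

/-- A Boolean permutation: a product of distinct simple reflections. -/
def BooleanPerm {n : ℕ} (w : Equiv.Perm (Fin n)) : Prop :=
  ∃ js : List {j : ℕ // j + 1 < n}, (js.map Subtype.val).Nodup ∧ w = (js.map sRefl).prod

/-- `w` avoids the pattern `(321)`. -/
def Avoids321 {n : ℕ} (w : Equiv.Perm (Fin n)) : Prop :=
  ¬ ∃ i j k : Fin n, i < j ∧ j < k ∧ w k < w j ∧ w j < w i

/-- `w` avoids the pattern `(3412)`. -/
def Avoids3412 {n : ℕ} (w : Equiv.Perm (Fin n)) : Prop :=
  ¬ ∃ i j k l : Fin n, i < j ∧ j < k ∧ k < l ∧ w k < w l ∧ w l < w i ∧ w i < w j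

/-- `w` avoids the pattern `(4231)`. -/
def Avoids4231 {n : ℕ} (w : Equiv.Perm (Fin n)) : Prop :=
  ¬ ∃ i j k l : Fin n, i < j ∧ j < k ∧ k < l ∧ w l < w j ∧ w j < w k ∧ w k < w i

lemma perm_apply_inv_self' {α : Type*} (f : Equiv.Perm α) (x : α) : f (f⁻¹ x) = x :=
  Equiv.apply_symm_apply f x

lemma perm_inv_apply_self' {α : Type*} (f : Equiv.Perm α) (x : α) : f⁻¹ (f x) = x :=
  Equiv.symm_apply_apply f x

lemma double_apply_val {n : ℕ} (w : Equiv.Perm (Fin n)) (i : Fin (2 * n)) :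
    ((double w) i).1 = 2 * (w ⟨i.1 / 2, by have := i.2; omega⟩).1 + i.1 % 2 := rfl

lemma double_div {n : ℕ} (w : Equiv.Perm (Fin n)) (i : Fin (2 * n)) :
    ((double w) i).1 / 2 = (w ⟨i.1 / 2, by have := i.2; omega⟩).1 := by
  rw [double_apply_val]; omega

lemma inv_div_aux {n : ℕ} (u : Equiv.Perm (Fin (2 * n))) (w : Equiv.Perm (Fin n))
    (hA : ∀ i : Fin (2 * n), (u i).1 / 2 = (w ⟨i.1 / 2, by have := i.2; omega⟩).1) :
    ∀ i : Fin (2 * n), (u⁻¹ i).1 / 2 = (w⁻¹ ⟨i.1 / 2, by have := i.2; omega⟩).1 := by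
  intro i
  have h := hA (u⁻¹ i)
  rw [perm_apply_inv_self'] at h
  have h2 : (⟨i.1 / 2, by have := i.2; omega⟩ : Fin n)
      = w ⟨(u⁻¹ i).1 / 2, by have := (u⁻¹ i).2; omega⟩ := Fin.ext h
  rw [h2, perm_inv_apply_self']

lemma conj_mem_aux {n : ℕ} (u : Equiv.Perm (Fin (2 * n))) (w : Equiv.Perm (Fin n))
    (hA : ∀ i : Fin (2 * n), (u i).1 / 2 = (w ⟨i.1 / 2, by have := i.2; omega⟩).1)
    (k : Equiv.Perm (Fin (2 * n))) (hk : k ∈ pairSubgroup n) :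
    u * k * u⁻¹ ∈ pairSubgroup n := by
  have hB := inv_div_aux u w hA
  intro i
  simp only [Equiv.Perm.mul_apply]
  rw [hA (k (u⁻¹ i))]
  have h1 : (k (u⁻¹ i)).1 / 2 = (u⁻¹ i).1 / 2 := hk _
  have h2 : (⟨(k (u⁻¹ i)).1 / 2, by have := (k (u⁻¹ i)).2; omega⟩ : Fin n)
      = ⟨(u⁻¹ i).1 / 2, by have := (u⁻¹ i).2; omega⟩ := Fin.ext h1
  rw [h2]
  have h3 : (⟨(u⁻¹ i).1 / 2, by have := (u⁻¹ i).2; omega⟩ : Fin n)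
      = w⁻¹ ⟨i.1 / 2, by have := i.2; omega⟩ := Fin.ext (hB i)
  rw [h3, perm_apply_inv_self']

/-- The block map of `u`: `j ↦ ⌊u(2j)/2⌋`. -/
def blockMap {n : ℕ} (u : Equiv.Perm (Fin (2 * n))) (j : Fin n) : Fin n :=
  ⟨(u ⟨2 * j.1, by have := j.2; omega⟩).1 / 2,
    by have := (u (⟨2 * j.1, by have := j.2; omega⟩ : Fin (2 * n))).2; omega⟩

/-- The normalizer of `H` in `S_{2n}` is `H ⋊ {w̃ : w ∈ S_n}`: an element lies in the
normalizer of `H` iff it can be written uniquely as `h * w̃` with `h ∈ H`, `w ∈ S_n`. -/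
theorem stmt5 (n : ℕ) (u : Equiv.Perm (Fin (2 * n))) :
    u ∈ Subgroup.normalizer (pairSubgroup n : Set (Equiv.Perm (Fin (2 * n)))) ↔
      ∃! p : Equiv.Perm (Fin (2 * n)) × Equiv.Perm (Fin n),
        p.1 ∈ pairSubgroup n ∧ u = p.1 * double p.2 := by
  constructor
  · intro hu
    rw [Subgroup.mem_normalizer_iff] at hu
    -- u maps each pair into a single pair
    have pair : ∀ j : Fin n,
        (u ⟨2 * j.1 + 1, by have := j.2; omega⟩).1 / 2
          = (u ⟨2 * j.1, by have := j.2; omega⟩).1 / 2 := by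
      intro j
      set a : Fin (2 * n) := ⟨2 * j.1, by have := j.2; omega⟩ with ha
      set b : Fin (2 * n) := ⟨2 * j.1 + 1, by have := j.2; omega⟩ with hb
      have hsw : Equiv.swap a b ∈ pairSubgroup n := by
        intro i
        rw [Equiv.swap_apply_def]
        split_ifs with h1 h2
        · subst h1; rw [ha, hb]; simp; omega
        · subst h2; rw [ha, hb]; simp; omega
        · rfl
      have hmem := (hu (Equiv.swap a b)).mp hsw
      have h2 := hmem (u a)
      simp only [Equiv.Perm.mul_apply, perm_inv_apply_self',
        Equiv.swap_apply_left] at h2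
      exact h2
    -- blockMap u is injective
    have hinj : Function.Injective (blockMap u) := by
      intro j j' hjj
      by_contra hne
      have h1 : (u ⟨2 * j.1, by have := j.2; omega⟩).1 / 2
          = (u ⟨2 * j'.1, by have := j'.2; omega⟩).1 / 2 := congrArg Fin.val hjj
      have h2 := pair j
      have hxz : u ⟨2 * j.1, by have := j.2; omega⟩ ≠ u ⟨2 * j'.1, by have := j'.2; omega⟩ := by
        intro h
        exact hne (Fin.ext (by have := congrArg Fin.val (u.injective h); simp at this; omega))
      have hxy : u ⟨2 * j.1, by have := j.2; omega⟩
          ≠ u ⟨2 * j.1 + 1, by have := j.2; omega⟩ := by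
        intro h
        have := congrArg Fin.val (u.injective h); simp at this
      have hyz : u ⟨2 * j.1 + 1, by have := j.2; omega⟩
          ≠ u ⟨2 * j'.1, by have := j'.2; omega⟩ := by
        intro h
        have := congrArg Fin.val (u.injective h); simp at this; omega
      have e1 : (u ⟨2 * j.1, by have := j.2; omega⟩).1
          ≠ (u ⟨2 * j'.1, by have := j'.2; omega⟩).1 := fun h => hxz (Fin.ext h)
      have e2 : (u ⟨2 * j.1, by have := j.2; omega⟩).1
          ≠ (u ⟨2 * j.1 + 1, by have := j.2; omega⟩).1 := fun h => hxy (Fin.ext h)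
      have e3 : (u ⟨2 * j.1 + 1, by have := j.2; omega⟩).1
          ≠ (u ⟨2 * j'.1, by have := j'.2; omega⟩).1 := fun h => hyz (Fin.ext h)
      omega
    have hbij : Function.Bijective (blockMap u) :=
      Finite.injective_iff_bijective.mp hinj
    set w : Equiv.Perm (Fin n) := Equiv.ofBijective (blockMap u) hbij with hwdef
    have hA : ∀ i : Fin (2 * n), (u i).1 / 2 = (w ⟨i.1 / 2, by have := i.2; omega⟩).1 := by
      intro i
      have hw : w ⟨i.1 / 2, by have := i.2; omega⟩
          = blockMap u ⟨i.1 / 2, by have := i.2; omega⟩ := rfl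
      rw [hw]
      show (u i).1 / 2 = (u ⟨2 * (i.1 / 2), by have := i.2; omega⟩).1 / 2
      by_cases h : i.1 % 2 = 0
      · have e : i = (⟨2 * (i.1 / 2), by have := i.2; omega⟩ : Fin (2 * n)) := by
          apply Fin.ext; show i.1 = 2 * (i.1 / 2); omega
        conv_lhs => rw [e]
      · have e : i = (⟨2 * (i.1 / 2) + 1, by have := i.2; omega⟩ : Fin (2 * n)) := by
          apply Fin.ext; show i.1 = 2 * (i.1 / 2) + 1; omega
        conv_lhs => rw [e]
        exact pair ⟨i.1 / 2, by have := i.2; omega⟩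
    refine ⟨(u * (double w)⁻¹, w), ⟨?_, ?_⟩, ?_⟩
    · -- membership in pairSubgroup
      intro i
      show (u ((double w)⁻¹ i)).1 / 2 = i.1 / 2
      have h1 := hA ((double w)⁻¹ i)
      have h3 := double_div w ((double w)⁻¹ i)
      rw [perm_apply_inv_self'] at h3
      exact h1.trans h3.symm
    · exact (inv_mul_cancel_right u (double w)).symm
    · rintro ⟨h', w'⟩ ⟨hh', huw'⟩
      simp only at hh' huw'
      have hA' : ∀ i : Fin (2 * n), (u i).1 / 2 = (w' ⟨i.1 / 2, by have := i.2; omega⟩).1 := by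
        intro i
        rw [huw']
        simp only [Equiv.Perm.mul_apply]
        rw [hh' (double w' i)]
        exact double_div w' i
      have hww : w' = w := by
        apply Equiv.ext
        intro j
        apply Fin.ext
        have h1 := hA ⟨2 * j.1, by have := j.2; omega⟩
        have h2 := hA' ⟨2 * j.1, by have := j.2; omega⟩
        have h4 : j = (⟨2 * j.1 / 2, by have := j.2; omega⟩ : Fin n) := by
          apply Fin.ext; show j.1 = 2 * j.1 / 2; omega
        rw [h4]
        exact h2.symm.trans h1
      have hh : h' = u * (double w)⁻¹ := by
        rw [huw', hww, mul_inv_cancel_right]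
      exact Prod.ext hh hww
  · rintro ⟨⟨h, w⟩, ⟨hh, hu⟩, -⟩
    simp only at hh hu
    rw [Subgroup.mem_normalizer_iff]
    have hA : ∀ i : Fin (2 * n), (u i).1 / 2 = (w ⟨i.1 / 2, by have := i.2; omega⟩).1 := by
      intro i
      rw [hu]
      simp only [Equiv.Perm.mul_apply]
      rw [hh (double w i)]
      exact double_div w i
    have hA' := inv_div_aux u w hA
    intro k
    constructor
    · intro hk
      exact conj_mem_aux u w hA k hk
    · intro hk
      have hmem := conj_mem_aux u⁻¹ w⁻¹ hA' _ hk
      have e : u⁻¹ * (u * k * u⁻¹) * u⁻¹⁻¹ = k := by group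
      rwa [e] at hmem
end

section
/- Let 𝐰 = s_{j_1}···s_{j_l} be a reduced word for w in a Coxeter group W, and for a mask x ∈ {0,1}^l define the defect set D(x) = {i : π(𝐰^{(i-1)}[x])(α_{j_i}) < 0}, where 𝐰^{(i-1)}[x] is the subword from the first i-1 letters selected by x and α_j is the simple root for s_j. Then ℓ(π(𝐰[x])) = #{i : x_i = 1, i ∉ D(x)} − #{i : x_i = 1, i ∈ D(x)} for every mask x. -/
open CoxeterSystem

variable {B W : Type*} [Group W] {M : CoxeterMatrix B}

/-- Bruhat order on a Coxeter group: the reflexive-transitive closure of the relation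
`a → a * t` where `t` is a reflection and `ℓ(a * t) > ℓ(a)`. -/
def coxBruhatLE (cs : CoxeterSystem M W) (x w : W) : Prop :=
  Relation.ReflTransGen
    (fun a b => (∃ t, cs.IsReflection t ∧ b = a * t) ∧ cs.length a < cs.length b) x w

/-- The product `π(𝐰[x])` of the letters of the word `ω` selected by the mask `x`. -/
def maskProd (cs : CoxeterSystem M W) (ω : List B) (x : Fin ω.length → Bool) : W :=
  cs.wordProd (((List.finRange ω.length).filter (fun i => x i)).map ω.get)

/-- The product `π(𝐰^{(i-1)}[x])` of the letters of `ω` before position `i` selected by the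
mask `x`. -/
def maskPrefixProd (cs : CoxeterSystem M W) (ω : List B) (x : Fin ω.length → Bool)
    (i : Fin ω.length) : W :=
  cs.wordProd (((List.finRange ω.length).filter (fun k => x k && decide (k.1 < i.1))).map ω.get)

/-- Position `i` is a defect of the mask `x`: `π(𝐰^{(i-1)}[x])(α_{j_i}) < 0`, i.e. right
multiplication by the simple reflection `s_{j_i}` decreases the length of `π(𝐰^{(i-1)}[x])`. -/
def IsDefect (cs : CoxeterSystem M W) (ω : List B) (x : Fin ω.length → Bool)
    (i : Fin ω.length) : Prop :=
  cs.length (maskPrefixProd cs ω x i * cs.simple (ω.get i)) <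
    cs.length (maskPrefixProd cs ω x i)

private lemma filter_lt_succ_aux {n : ℕ} (p : Fin n → Bool) (i : Fin n) :
    ∀ (l : List (Fin n)), l.Pairwise (fun a b => a.1 < b.1) → i ∈ l →
    l.filter (fun k => p k && decide (k.1 < i.1 + 1)) =
    l.filter (fun k => p k && decide (k.1 < i.1)) ++ (if p i then [i] else []) := by
  intro l
  induction l with
  | nil => intro _ h; cases h
  | cons a l ih =>
    intro hpw hmem
    have hpw' := (List.pairwise_cons.mp hpw).2
    have ha := (List.pairwise_cons.mp hpw).1
    rcases List.mem_cons.mp hmem with rfl | hmem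
    · have h1 : l.filter (fun k => p k && decide (k.1 < i.1 + 1)) = [] := by
        apply List.filter_eq_nil_iff.mpr
        intro b hb
        have := ha b hb
        simp only [Bool.and_eq_true, decide_eq_true_eq, not_and]
        omega
      have h2 : l.filter (fun k => p k && decide (k.1 < i.1)) = [] := by
        apply List.filter_eq_nil_iff.mpr
        intro b hb
        have := ha b hb
        simp only [Bool.and_eq_true, decide_eq_true_eq, not_and]
        omega
      simp only [List.filter_cons, h1, h2]
      cases hp : p i <;> simp [hp]
    · have hai : a.1 < i.1 := ha i hmem
      have h1 : (decide (a.1 < i.1 + 1)) = true := by simp; omega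
      have h2 : (decide (a.1 < i.1)) = true := by simp [hai]
      simp only [List.filter_cons, h1, h2, Bool.and_true]
      rw [ih hpw' hmem]
      cases hp : p a <;> simp

/-- For any mask `x` on a reduced word `ω`,
`ℓ(π(ω[x])) = #{i : x_i = 1, i ∉ D(x)} - #{i : x_i = 1, i ∈ D(x)}`. -/
theorem stmt18 (cs : CoxeterSystem M W) (ω : List B) (hred : cs.IsReduced ω)
    (x : Fin ω.length → Bool) :
    cs.length (maskProd cs ω x)
        + Set.ncard {i : Fin ω.length | x i = true ∧ IsDefect cs ω x i}
      = Set.ncard {i : Fin ω.length | x i = true ∧ ¬ IsDefect cs ω x i} := by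
  classical
  have key : ∀ i : ℕ, i ≤ ω.length →
      cs.length (cs.wordProd (((List.finRange ω.length).filter
          (fun k => x k && decide (k.1 < i))).map ω.get))
        + (Finset.univ.filter
            (fun k : Fin ω.length => x k = true ∧ IsDefect cs ω x k ∧ k.1 < i)).card
      = (Finset.univ.filter
            (fun k : Fin ω.length => x k = true ∧ ¬ IsDefect cs ω x k ∧ k.1 < i)).card := by
    intro i
    induction i with
    | zero =>
      intro _
      have h0 : (List.finRange ω.length).filter (fun k => x k && decide (k.1 < 0)) = [] := by
        simp
      rw [h0]
      have e1 : (Finset.univ.filter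
          (fun k : Fin ω.length => x k = true ∧ IsDefect cs ω x k ∧ k.1 < 0)) = ∅ :=
        Finset.filter_false_of_mem (fun k _ h => absurd h.2.2 (Nat.not_lt_zero _))
      have e2 : (Finset.univ.filter
          (fun k : Fin ω.length => x k = true ∧ ¬ IsDefect cs ω x k ∧ k.1 < 0)) = ∅ :=
        Finset.filter_false_of_mem (fun k _ h => absurd h.2.2 (Nat.not_lt_zero _))
      rw [e1, e2, List.map_nil, cs.wordProd_nil, cs.length_one]
      simp
    | succ i ih =>
      intro hi
      have hi' : i < ω.length := hi
      have ihe := ih (le_of_lt hi')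
      set I : Fin ω.length := ⟨i, hi'⟩ with hI
      -- list decomposition
      have hlist := filter_lt_succ_aux x I (List.finRange ω.length)
        (List.pairwise_lt_finRange ω.length)
        (List.mem_finRange I)
      -- card decomposition
      have hcard : ∀ (P : Fin ω.length → Prop) [DecidablePred P],
          (Finset.univ.filter (fun k : Fin ω.length => x k = true ∧ P k ∧ k.1 < i + 1)).card
            = (Finset.univ.filter
                (fun k : Fin ω.length => x k = true ∧ P k ∧ k.1 < i)).card
              + (if x I = true ∧ P I then 1 else 0) := by
        intro P _
        have hsplit : (Finset.univ.filter
              (fun k : Fin ω.length => x k = true ∧ P k ∧ k.1 < i + 1))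
            = (Finset.univ.filter (fun k : Fin ω.length => x k = true ∧ P k ∧ k.1 < i))
              ∪ (Finset.univ.filter (fun k : Fin ω.length => x k = true ∧ P k ∧ k = I)) := by
          ext k
          simp only [Finset.mem_filter, Finset.mem_univ, true_and, Finset.mem_union]
          constructor
          · rintro ⟨h1, h2, h3⟩
            rcases Nat.lt_succ_iff_lt_or_eq.mp h3 with h | h
            · exact Or.inl ⟨h1, h2, h⟩
            · exact Or.inr ⟨h1, h2, Fin.ext h⟩
          · rintro (⟨h1, h2, h3⟩ | ⟨h1, h2, rfl⟩)
            · exact ⟨h1, h2, Nat.lt_succ_of_lt h3⟩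
            · exact ⟨h1, h2, Nat.lt_succ_self i⟩
        have hdisj : Disjoint
            (Finset.univ.filter (fun k : Fin ω.length => x k = true ∧ P k ∧ k.1 < i))
            (Finset.univ.filter (fun k : Fin ω.length => x k = true ∧ P k ∧ k = I)) := by
          rw [Finset.disjoint_left]
          intro k hk hk'
          simp only [Finset.mem_filter, Finset.mem_univ, true_and] at hk hk'
          rcases hk' with ⟨_, _, rfl⟩
          exact absurd hk.2.2 (Nat.lt_irrefl i)
        have hsing : (Finset.univ.filter
              (fun k : Fin ω.length => x k = true ∧ P k ∧ k = I)).card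
            = (if x I = true ∧ P I then 1 else 0) := by
          split_ifs with h
          · rw [show (Finset.univ.filter
                (fun k : Fin ω.length => x k = true ∧ P k ∧ k = I)) = {I} from ?_]
            · simp
            · ext k
              simp only [Finset.mem_filter, Finset.mem_univ, true_and, Finset.mem_singleton]
              constructor
              · rintro ⟨_, _, rfl⟩; rfl
              · rintro rfl; exact ⟨h.1, h.2, rfl⟩
          · rw [show (Finset.univ.filter
                (fun k : Fin ω.length => x k = true ∧ P k ∧ k = I)) = ∅ from ?_]
            · simp
            · ext k
              simp only [Finset.mem_filter, Finset.mem_univ, true_and,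
                Finset.notMem_empty, iff_false]
              rintro ⟨h1, h2, rfl⟩
              exact h ⟨h1, h2⟩
        rw [hsplit, Finset.card_union_of_disjoint hdisj, hsing]
      have hD := hcard (fun k => IsDefect cs ω x k)
      have hN := hcard (fun k => ¬ IsDefect cs ω x k)
      have hprefix : cs.wordProd (((List.finRange ω.length).filter
          (fun k => x k && decide (k.1 < i))).map ω.get) = maskPrefixProd cs ω x I := rfl
      rw [hD, hN]
      cases hx : x I with
      | false =>
        rw [if_neg (by simp [hx]), List.append_nil] at hlist
        rw [hlist]
        rw [if_neg (by simp [hx]), if_neg (by simp [hx])]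
        simp only [Nat.add_zero]
        exact ihe
      | true =>
        rw [if_pos hx] at hlist
        rw [hlist, List.map_append, cs.wordProd_append, hprefix]
        have hws : cs.wordProd (List.map ω.get [I]) = cs.simple (ω.get I) := by
          simp [CoxeterSystem.wordProd]
        rw [hws]
        rw [hprefix] at ihe
        rcases cs.length_mul_simple (maskPrefixProd cs ω x I) (ω.get I) with h | h
        · have hnd : ¬ IsDefect cs ω x I := by
            unfold IsDefect; omega
          rw [if_neg (fun hc => hnd hc.2), if_pos ⟨rfl, hnd⟩]
          omega
        · have hd : IsDefect cs ω x I := by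
            unfold IsDefect; omega
          rw [if_pos ⟨rfl, hd⟩, if_neg (fun hc => hc.2 hd)]
          omega
  have keyn := key ω.length le_rfl
  have hall : (List.finRange ω.length).filter (fun k => x k && decide (k.1 < ω.length))
      = (List.finRange ω.length).filter (fun k => x k) := by
    apply List.filter_congr
    intro k _
    simp [k.isLt]
  have hsetD : {i : Fin ω.length | x i = true ∧ IsDefect cs ω x i}
      = ↑(Finset.univ.filter
          (fun k : Fin ω.length => x k = true ∧ IsDefect cs ω x k ∧ k.1 < ω.length)) := by
    ext k
    simp [k.isLt]
  have hsetN : {i : Fin ω.length | x i = true ∧ ¬ IsDefect cs ω x i}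
      = ↑(Finset.univ.filter
          (fun k : Fin ω.length => x k = true ∧ ¬ IsDefect cs ω x k ∧ k.1 < ω.length)) := by
    ext k
    simp [k.isLt]
  rw [hsetD, hsetN, Set.ncard_coe_finset, Set.ncard_coe_finset]
  rw [hall] at keyn
  exact keyn
end

section
/- Let w be a smooth permutation in S_n (i.e., w avoids (4231) and (3412)) and let u ∈ K, the parity-preserving subgroup of S_{2n}. If u_odd ≤ w and u_even ≤ w in the Bruhat order on S_n, then u ≤ w̃ in the Bruhat order on S_{2n}. -/
section InvCount
variable {m : ℕ}

def invFinset (x : Equiv.Perm (Fin m)) : Finset (Fin m × Fin m) :=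
  Finset.univ.filter (fun r => r.1 < r.2 ∧ x r.2 < x r.1)

def twFinset (x : Equiv.Perm (Fin m)) (p q : Fin m) : Finset (Fin m × Fin m) :=
  Finset.univ.filter (fun r => Equiv.swap p q r.1 < Equiv.swap p q r.2 ∧ x r.2 < x r.1)

def psiMap (p q : Fin m) : Fin m × Fin m → Fin m × Fin m :=
  fun r => (if r.1 = p ∧ r.2 < q then q else r.1, if r.2 = q ∧ p < r.1 then p else r.2)

def chiMap (p q : Fin m) : Fin m × Fin m → Fin m × Fin m :=
  fun r => (if r.1 = q ∧ r.2 < q then p else r.1, if r.2 = p ∧ p < r.1 then q else r.2)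

lemma invLength_eq (x : Equiv.Perm (Fin m)) : invLength x = (invFinset x).card := by
  rw [invLength, show {p : Fin m × Fin m | p.1 < p.2 ∧ x p.2 < x p.1} = ↑(invFinset x) by
    ext r; simp [invFinset]]
  exact Set.ncard_coe_finset _

lemma psi_mem (x : Equiv.Perm (Fin m)) {p q : Fin m} (hpq : p < q) (hx : x p < x q)
    {i j : Fin m} (hij : i < j) (hxij : x j < x i) :
    psiMap p q (i, j) ∈ (twFinset x p q).erase (q, p) := by
  rcases eq_or_ne i p with hip | hip <;> rcases eq_or_ne j q with hjq | hjq <;>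
    rcases eq_or_ne i q with hiq | hiq <;> rcases eq_or_ne j p with hjp | hjp <;>
    (try subst hip) <;> (try subst hjq) <;> (try subst hiq) <;> (try subst hjp) <;>
    simp only [twFinset, Finset.mem_erase, Finset.mem_filter, Finset.mem_univ, true_and] <;>
    simp only [psiMap, twFinset, Finset.mem_erase, Finset.mem_filter, Finset.mem_univ, true_and,
      Prod.mk.injEq, Equiv.swap_apply_def, Ne, Prod.ext_iff, not_and] <;>
    simp only [Fin.lt_def, Fin.ext_iff] at * <;>
    split_ifs <;> omega

lemma chi_psi (x : Equiv.Perm (Fin m)) {p q : Fin m} (hpq : p < q) (hx : x p < x q)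
    {i j : Fin m} (hij : i < j) (hxij : x j < x i) :
    chiMap p q (psiMap p q (i, j)) = (i, j) := by
  rcases eq_or_ne i p with hip | hip <;> rcases eq_or_ne j q with hjq | hjq <;>
    rcases eq_or_ne i q with hiq | hiq <;> rcases eq_or_ne j p with hjp | hjp <;>
    (try subst hip) <;> (try subst hjq) <;> (try subst hiq) <;> (try subst hjp) <;>
    simp only [psiMap, chiMap, Prod.mk.injEq, Prod.ext_iff] <;>
    simp only [Fin.lt_def, Fin.ext_iff] at * <;>
    split_ifs <;> omega

lemma invLength_lt_mul_swap (x : Equiv.Perm (Fin m)) {p q : Fin m} (hpq : p < q)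
    (hx : x p < x q) : invLength x < invLength (x * Equiv.swap p q) := by
  classical
  rw [invLength_eq, invLength_eq]
  have hcard : (invFinset (x * Equiv.swap p q)).card = (twFinset x p q).card := by
    apply Finset.card_bij' (fun r _ => (Equiv.swap p q r.1, Equiv.swap p q r.2))
      (fun r _ => (Equiv.swap p q r.1, Equiv.swap p q r.2))
    · intro r hr
      simp only [invFinset, Finset.mem_filter, Finset.mem_univ, true_and] at hr
      simp only [invFinset, Finset.mem_filter, Finset.mem_univ, true_and,
        Equiv.Perm.mul_apply] at hr
      simp [twFinset, Equiv.swap_apply_self, hr.1, hr.2]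
    · intro r hr
      simp only [twFinset, Finset.mem_filter, Finset.mem_univ, true_and] at hr
      simp only [invFinset, Finset.mem_filter, Finset.mem_univ, true_and]
      simp [invFinset, Equiv.Perm.mul_apply, Equiv.swap_apply_self, hr.1, hr.2]
    · intro r hr; simp [Equiv.swap_apply_self]
    · intro r hr; simp [Equiv.swap_apply_self]
  rw [hcard]
  have hqp : (q, p) ∈ twFinset x p q := by
    simp [twFinset, Equiv.swap_apply_left, Equiv.swap_apply_right, hpq, hx]
  have hmem : ∀ r ∈ invFinset x, psiMap p q r ∈ (twFinset x p q).erase (q, p) := by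
    rintro ⟨i, j⟩ hr
    simp only [invFinset, Finset.mem_filter, Finset.mem_univ, true_and] at hr
    exact psi_mem x hpq hx hr.1 hr.2
  have hinj : Set.InjOn (psiMap p q) (invFinset x) := by
    rintro ⟨i, j⟩ ha ⟨i', j'⟩ hb h
    simp only [invFinset, Finset.coe_filter, Set.mem_setOf_eq, Finset.mem_univ,
      true_and] at ha hb
    have := congrArg (chiMap p q) h
    rwa [chi_psi x hpq hx ha.1 ha.2, chi_psi x hpq hx hb.1 hb.2] at this
  calc (invFinset x).card ≤ ((twFinset x p q).erase (q, p)).card :=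
        Finset.card_le_card_of_injOn (psiMap p q) hmem hinj
    _ < (twFinset x p q).card := Finset.card_erase_lt_of_mem hqp

end InvCount

section Aux
variable {m n : ℕ}

lemma step_lt {a : Equiv.Perm (Fin m)} {i j : Fin m} (hij : i < j) (h : a j < a i) :
    invLength (a * Equiv.swap i j) < invLength a := by
  have h2 : (a * Equiv.swap i j) i < (a * Equiv.swap i j) j := by
    simp only [Equiv.Perm.mul_apply, Equiv.swap_apply_left, Equiv.swap_apply_right]
    exact h
  have := invLength_lt_mul_swap (a * Equiv.swap i j) hij h2
  rwa [mul_assoc, Equiv.swap_mul_self, mul_one] at this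

lemma step_form {a c : Equiv.Perm (Fin m)}
    (h : (∃ i j, c = a * Equiv.swap i j) ∧ invLength a < invLength c) :
    ∃ i j, i < j ∧ a i < a j ∧ c = a * Equiv.swap i j := by
  obtain ⟨⟨i, j, rfl⟩, hlt⟩ := h
  rcases lt_trichotomy i j with hij | rfl | hij
  · refine ⟨i, j, hij, ?_, rfl⟩
    rcases lt_trichotomy (a i) (a j) with h' | h' | h'
    · exact h'
    · exact absurd (a.injective h') hij.ne
    · exact absurd (step_lt hij h') (by omega)
  · rw [Equiv.swap_self] at hlt
    simp only [show (Equiv.refl (Fin m)) = 1 from rfl, mul_one] at hlt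
    omega
  · refine ⟨j, i, hij, ?_, by rw [Equiv.swap_comm]⟩
    rw [Equiv.swap_comm] at hlt
    rcases lt_trichotomy (a j) (a i) with h' | h' | h'
    · exact h'
    · exact absurd (a.injective h') hij.ne
    · exact absurd (step_lt hij h') (by omega)

lemma swap_map {α β : Type*} [DecidableEq α] [DecidableEq β] (e : α ≃ β) (a b x : α) :
    Equiv.swap (e a) (e b) (e x) = e (Equiv.swap a b x) := by
  rcases eq_or_ne x a with rfl | h1
  · simp
  · rcases eq_or_ne x b with rfl | h2
    · simp
    · rw [Equiv.swap_apply_of_ne_of_ne h1 h2,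
        Equiv.swap_apply_of_ne_of_ne (e.injective.ne h1) (e.injective.ne h2)]

def mixPerm (a b : Equiv.Perm (Fin n)) : Equiv.Perm (Fin n × Fin 2) where
  toFun p := (if p.2.1 = 0 then a p.1 else b p.1, p.2)
  invFun p := (if p.2.1 = 0 then a⁻¹ p.1 else b⁻¹ p.1, p.2)
  left_inv := by rintro ⟨i, ε⟩; fin_cases ε <;> simp
  right_inv := by rintro ⟨i, ε⟩; fin_cases ε <;> simp

def interleave (a b : Equiv.Perm (Fin n)) : Equiv.Perm (Fin (2 * n)) :=
  (pairFinEquiv n).permCongr (mixPerm a b)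

lemma interleave_apply (a b : Equiv.Perm (Fin n)) (i : Fin n) (ε : Fin 2) :
    interleave a b (pairFinEquiv n (i, ε)) =
      pairFinEquiv n (if ε.1 = 0 then a i else b i, ε) := by
  simp [interleave, mixPerm, Equiv.permCongr_apply, Equiv.symm_apply_apply]

lemma double_apply (w : Equiv.Perm (Fin n)) (i : Fin n) (ε : Fin 2) :
    double w (pairFinEquiv n (i, ε)) = pairFinEquiv n (w i, ε) := by
  simp [double, Equiv.permCongr_apply, Equiv.symm_apply_apply]

lemma ext2 {f g : Equiv.Perm (Fin (2 * n))}
    (h : ∀ (i : Fin n) (ε : Fin 2), f (pairFinEquiv n (i, ε)) = g (pairFinEquiv n (i, ε))) :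
    f = g := by
  ext k
  have h2 := h ((pairFinEquiv n).symm k).1 ((pairFinEquiv n).symm k).2
  rw [show ((((pairFinEquiv n).symm k).1, ((pairFinEquiv n).symm k).2) : Fin n × Fin 2)
      = (pairFinEquiv n).symm k from rfl, Equiv.apply_symm_apply] at h2
  exact congrArg Fin.val h2

lemma double_eq_interleave (w : Equiv.Perm (Fin n)) : double w = interleave w w := by
  apply ext2
  intro i ε
  rw [double_apply, interleave_apply]
  congr 1
  simp

lemma interleave_mul_swap_left (a b : Equiv.Perm (Fin n)) (i j : Fin n) :
    interleave (a * Equiv.swap i j) b =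
      interleave a b
        * Equiv.swap (pairFinEquiv n (i, 0)) (pairFinEquiv n (j, 0)) := by
  apply ext2
  intro r ε
  rw [Equiv.Perm.mul_apply, swap_map (pairFinEquiv n) (i, 0) (j, 0) (r, ε),
    interleave_apply, interleave_apply]
  fin_cases ε
  · rcases eq_or_ne r i with rfl | h1
    · simp [Equiv.Perm.mul_apply]
    · rcases eq_or_ne r j with rfl | h2
      · simp [Equiv.Perm.mul_apply]
      · rw [Equiv.swap_apply_of_ne_of_ne (by simp [h1]) (by simp [h2])]
        simp [Equiv.Perm.mul_apply, Equiv.swap_apply_of_ne_of_ne h1 h2]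
  · rw [Equiv.swap_apply_of_ne_of_ne (by simp) (by simp)]
    simp

lemma interleave_mul_swap_right (a b : Equiv.Perm (Fin n)) (i j : Fin n) :
    interleave a (b * Equiv.swap i j) =
      interleave a b
        * Equiv.swap (pairFinEquiv n (i, 1)) (pairFinEquiv n (j, 1)) := by
  apply ext2
  intro r ε
  rw [Equiv.Perm.mul_apply, swap_map (pairFinEquiv n) (i, 1) (j, 1) (r, ε),
    interleave_apply, interleave_apply]
  fin_cases ε
  · rw [Equiv.swap_apply_of_ne_of_ne (by simp) (by simp)]
    simp
  · rcases eq_or_ne r i with rfl | h1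
    · simp [Equiv.Perm.mul_apply]
    · rcases eq_or_ne r j with rfl | h2
      · simp [Equiv.Perm.mul_apply]
      · rw [Equiv.swap_apply_of_ne_of_ne (by simp [h1]) (by simp [h2])]
        simp [Equiv.Perm.mul_apply, Equiv.swap_apply_of_ne_of_ne h1 h2]

lemma pairFinEquiv_lt {i j : Fin n} {ε δ : Fin 2} (h : i < j) :
    pairFinEquiv n (i, ε) < pairFinEquiv n (j, δ) := by
  simp only [pairFinEquiv, Equiv.coe_fn_mk, Fin.lt_def]
  have := ε.2; have := δ.2
  simp only [Fin.lt_def] at h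
  omega

lemma lift_left (b : Equiv.Perm (Fin n)) {a a' : Equiv.Perm (Fin n)} (h : BruhatLE a a') :
    BruhatLE (interleave a b) (interleave a' b) := by
  induction h with
  | refl => exact Relation.ReflTransGen.refl
  | @tail mid c hprev hstep ih =>
    refine ih.tail ?_
    obtain ⟨i, j, hij, hlt, rfl⟩ := step_form hstep
    rw [interleave_mul_swap_left]
    refine ⟨⟨_, _, rfl⟩, ?_⟩
    apply invLength_lt_mul_swap _ (pairFinEquiv_lt hij)
    rw [interleave_apply, interleave_apply]
    exact pairFinEquiv_lt hlt

lemma lift_right (a : Equiv.Perm (Fin n)) {b b' : Equiv.Perm (Fin n)} (h : BruhatLE b b') :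
    BruhatLE (interleave a b) (interleave a b') := by
  induction h with
  | refl => exact Relation.ReflTransGen.refl
  | @tail mid c hprev hstep ih =>
    refine ih.tail ?_
    obtain ⟨i, j, hij, hlt, rfl⟩ := step_form hstep
    rw [interleave_mul_swap_right]
    refine ⟨⟨_, _, rfl⟩, ?_⟩
    apply invLength_lt_mul_swap _ (pairFinEquiv_lt hij)
    rw [interleave_apply, interleave_apply]
    exact pairFinEquiv_lt hlt

end Aux

/-- If `w ∈ S_n` is smooth (avoids `(4231)` and `(3412)`) and `u ∈ K ≤ S_{2n}` has odd part
`a ≤ w` and even part `b ≤ w` in Bruhat order, then `u ≤ w̃` in the Bruhat order of `S_{2n}`. -/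
theorem stmt19 (n : ℕ) (w : Equiv.Perm (Fin n))
    (h4231 : Avoids4231 w) (h3412 : Avoids3412 w)
    (u : Equiv.Perm (Fin (2 * n))) (hu : u ∈ paritySubgroup n)
    (a b : Equiv.Perm (Fin n))
    (hab : ∀ i : Fin n,
      u ⟨2 * i.1, by have := i.2; omega⟩
          = ⟨2 * (a i).1, by have := (a i).2; omega⟩ ∧
      u ⟨2 * i.1 + 1, by have := i.2; omega⟩
          = ⟨2 * (b i).1 + 1, by have := (b i).2; omega⟩)
    (ha : BruhatLE a w) (hb : BruhatLE b w) :
    BruhatLE u (double w) := by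
  have hu : u = interleave a b := by
    apply ext2
    intro i ε
    rw [interleave_apply]
    fin_cases ε
    · have := (hab i).1
      simp only [pairFinEquiv, Equiv.coe_fn_mk]
      convert this using 2 <;> simp
    · have := (hab i).2
      simp only [pairFinEquiv, Equiv.coe_fn_mk]
      convert this using 2 <;> simp
  rw [hu, double_eq_interleave]
  exact Relation.ReflTransGen.trans (lift_left b ha) (lift_right w hb)
end
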